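/- The linear map n_T → H sending each rooted tree T to δ_T is an injective homomorphism of Lie algebras from n_T (with the Connes–Kreimer bracket) to H equipped with the commutator bracket [f,g] := f×g − g×f, and its image is exactly the space of primitive elements of H (those f with Δ(f) = f⊗δ_∅ + δ_∅⊗f). -/

import Mathlib

open scoped Classical

/-- Concrete (labeled) rooted trees: a root with a list of subtrees. -/
inductive RTree : Type
  | node : List RTree → RTree

/-- Shapes of admissible cuts: at each tree, either the full cut
(everything, including the root, goes to the pruned part `P`), or a choice of
an admissible cut of each child subtree.  A `full` occurring strictly inside
corresponds to cutting the edge above that vertex. -/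
inductive CutShape : Type
  | full
  | branch : List CutShape → CutShape

namespace CK

/-- Number of vertices of a forest. -/
def sizeL : List RTree → ℕ
  | [] => 0
  | .node l :: ts => 1 + sizeL l + sizeL ts

/-- All admissible cuts of a forest (a choice of admissible cut of each tree). -/
def cutsF : List RTree → List (List CutShape)
  | [] => [[]]
  | .node l :: ts =>
      (CutShape.full :: (cutsF l).map CutShape.branch).flatMap
        fun c => (cutsF ts).map (c :: ·)

/-- The root part `R_C(F)` of a cut. -/
def Rcut : List RTree → List CutShape → List RTree
  | [], _ => []
  | _ :: _, [] => []
  | .node _ :: ts, .full :: cs => Rcut ts cs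
  | .node l :: ts, .branch ds :: cs => RTree.node (Rcut l ds) :: Rcut ts cs

/-- The pruned part `P_C(F)` of a cut. -/
def Pcut : List RTree → List CutShape → List RTree
  | [], _ => []
  | _ :: _, [] => []
  | .node l :: ts, .full :: cs => RTree.node l :: Pcut ts cs
  | .node l :: ts, .branch ds :: cs => Pcut l ds ++ Pcut ts cs

/-- Number of `full`s occurring in a cut. -/
def fullsL : List CutShape → ℕ
  | [] => 0
  | .full :: cs => 1 + fullsL cs
  | .branch ds :: cs => fullsL ds + fullsL cs

/-- A list of concrete forests containing (representatives of) every forest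
with at most `n` vertices. -/
def forestsUpTo : ℕ → List (List RTree)
  | 0 => [[]]
  | n+1 => [] :: (forestsUpTo n).flatMap fun l => (forestsUpTo n).map fun F => RTree.node l :: F

/-- Isomorphism of rooted trees (non-planar): a root-preserving bijection, i.e.
the lists of subtrees agree up to permutation and isomorphism. -/
inductive Iso : RTree → RTree → Prop
  | node {l₁ l l₂ : List RTree} : List.Forall₂ Iso l₁ l → l.Perm l₂ → Iso (.node l₁) (.node l₂)

/-- Isomorphism classes of rooted trees. -/
abbrev TreeClass : Type := Quot Iso

/-- Isomorphism classes of rooted forests = multisets of tree classes.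
The empty forest is `0`. -/
abbrev ForestClass : Type := Multiset TreeClass

/-- Isomorphism class of a tree. -/
def clT (t : RTree) : TreeClass := Quot.mk _ t

/-- Isomorphism class of a forest. -/
def clF (F : List RTree) : ForestClass := (F.map clT : List TreeClass)

/-- A concrete representative of a forest class. -/
noncomputable def repF (M : ForestClass) : List RTree := M.toList.map Quot.out

/-- A concrete representative of a tree class. -/
noncomputable def repT (T : TreeClass) : RTree := T.out

/-- Number of vertices of a forest class. -/
noncomputable def sizeC (M : ForestClass) : ℕ := sizeL (repF M)

/-- Number of vertices of a tree class. -/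
noncomputable def sizeT (T : TreeClass) : ℕ := sizeL [repT T]

/-- The Hall algebra `H`: finitely supported ℚ-valued functions on
isomorphism classes of rooted forests, with basis the delta functions. -/
abbrev H : Type := ForestClass →₀ ℚ

/-- The basis element `δ_A` of `H`. -/
noncomputable def delta (A : ForestClass) : H := Finsupp.single A 1

/-- `n(A,B;M)`: the number of admissible cuts `C` of `M` with
`P_C(M) ≅ A` and `R_C(M) ≅ B`. -/
noncomputable def nCuts (A B M : ForestClass) : ℕ :=
  (cutsF (repF M)).countP fun c =>
    decide (clF (Pcut (repF M) c) = A ∧ clF (Rcut (repF M) c) = B)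

/-- A finite set of forest classes containing all classes with at most `n`
vertices. -/
noncomputable def forestCand (n : ℕ) : Finset ForestClass :=
  ((forestsUpTo n).map clF).toFinset

/-- A finite set of tree classes containing all classes with at most `n+1`
vertices. -/
noncomputable def treeCand (n : ℕ) : Finset TreeClass :=
  ((forestsUpTo n).map fun F => clT (RTree.node F)).toFinset

/-- The Hall product on basis elements: `δ_A × δ_B = Σ_M n(A,B;M)·δ_M`
(every `M` with `n(A,B;M) ≠ 0` has exactly `sizeC A + sizeC B` vertices). -/
noncomputable def mulBasis (A B : ForestClass) : H :=
  ∑ M ∈ forestCand (sizeC A + sizeC B), (nCuts A B M : ℚ) • delta M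

/-- The Hall product on `H`, extended bilinearly from basis elements. -/
noncomputable def hmul (f g : H) : H :=
  f.sum fun A a => g.sum fun B b => (a * b) • mulBasis A B

/-- The Connes-Kreimer Lie algebra `n_T` (as a vector space): the span of
isomorphism classes of rooted trees. -/
abbrev nT : Type := TreeClass →₀ ℚ

/-- The basis element of `n_T` corresponding to a rooted tree `T`. -/
noncomputable def tau (T : TreeClass) : nT := Finsupp.single T 1

/-- `a(T₁,T₂;T)`: the number of edges `e` of `T` such that the single-edge cut
at `e` has pruned part `≅ T₁` and root part `≅ T₂`. -/
noncomputable def aCount (T₁ T₂ T : TreeClass) : ℕ :=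
  (cutsF [repT T]).countP fun c =>
    decide (fullsL c = 1 ∧ clF (Pcut [repT T] c) = ({T₁} : Multiset TreeClass)
      ∧ clF (Rcut [repT T] c) = ({T₂} : Multiset TreeClass))

/-- The grafting (pre-Lie) product on basis elements:
`T₁ * T₂ = Σ_T a(T₁,T₂;T)·T`. -/
noncomputable def graftBasis (T₁ T₂ : TreeClass) : nT :=
  ∑ T ∈ treeCand (sizeT T₁ + sizeT T₂), (aCount T₁ T₂ T : ℚ) • tau T

/-- The grafting (pre-Lie) product on `n_T`, extended bilinearly. -/
noncomputable def graft (x y : nT) : nT :=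
  x.sum fun T₁ a => y.sum fun T₂ b => (a * b) • graftBasis T₁ T₂

/-- The Connes-Kreimer bracket `[x,y] = x*y - y*x` on `n_T`. -/
noncomputable def ckBracket (x y : nT) : nT := graft x y - graft y x

/-- `Ẽ_A δ_B = Σ_C δ_{R_C(B)}`, the sum over admissible cuts `C` of `B` with
`P_C(B) ≅ A`. -/
noncomputable def elimBasis (A B : ForestClass) : H :=
  (((cutsF (repF B)).filter fun c => decide (clF (Pcut (repF B) c) = A)).map
    fun c => delta (clF (Rcut (repF B) c))).sum

/-- The elimination operator `E_A` (here on `H ≅ H*`, identifying `φ_B` with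
`δ_B`). -/
noncomputable def elim (A : ForestClass) : H →ₗ[ℚ] H :=
  Finsupp.lsum ℚ fun B => LinearMap.toSpanSingleton ℚ H (elimBasis A B)

/-- `Ẽ^top_A δ_B = Σ_C δ_{P_C(B)}`, the sum over admissible cuts `C` of `B`
with `R_C(B) ≅ A`. -/
noncomputable def topElimBasis (A B : ForestClass) : H :=
  (((cutsF (repF B)).filter fun c => decide (clF (Rcut (repF B) c) = A)).map
    fun c => delta (clF (Pcut (repF B) c))).sum

/-- The top-elimination operator `E^top_A`. -/
noncomputable def topElim (A : ForestClass) : H →ₗ[ℚ] H :=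
  Finsupp.lsum ℚ fun B => LinearMap.toSpanSingleton ℚ H (topElimBasis A B)

/-- `H ⊗ H`, realized as finitely supported functions on pairs of classes. -/
abbrev H2 : Type := (ForestClass × ForestClass) →₀ ℚ

/-- `Δ(δ_M) = Σ δ_A ⊗ δ_B`, the sum over ordered pairs `(A,B)` of classes with
`A ⊔ B ≅ M`. -/
noncomputable def deltaBasis (M : ForestClass) : H2 :=
  ∑ A ∈ M.powerset.toFinset, Finsupp.single (A, M - A) 1

/-- The coproduct `Δ : H → H ⊗ H`. -/
noncomputable def coprod : H →ₗ[ℚ] H2 :=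
  Finsupp.lsum ℚ fun M => LinearMap.toSpanSingleton ℚ H2 (deltaBasis M)

/-- The linear map `n_T → H` sending each rooted tree `T` to `δ_{T}`
(the delta function of the one-tree forest `{T}`). -/
noncomputable def embed : nT →ₗ[ℚ] H :=
  Finsupp.lmapDomain ℚ ℚ fun T => ({T} : Multiset TreeClass)

-- helper: membership in cutsF of a cons
theorem mem_cutsF_cons {l ts : List RTree} {c : List CutShape} :
    c ∈ cutsF (.node l :: ts) ↔
      (∃ cs ∈ cutsF ts, c = .full :: cs) ∨
      (∃ ds ∈ cutsF l, ∃ cs ∈ cutsF ts, c = .branch ds :: cs) := by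
  simp only [cutsF, List.mem_flatMap, List.mem_cons, List.mem_map]
  constructor
  · rintro ⟨c₀, h₀ | ⟨ds, hds, rfl⟩, cs, hcs, rfl⟩
    · exact Or.inl ⟨cs, hcs, by rw [h₀]⟩
    · exact Or.inr ⟨ds, hds, cs, hcs, rfl⟩
  · rintro (⟨cs, hcs, rfl⟩ | ⟨ds, hds, cs, hcs, rfl⟩)
    · exact ⟨.full, Or.inl rfl, cs, hcs, rfl⟩
    · exact ⟨.branch ds, Or.inr ⟨ds, hds, rfl⟩, cs, hcs, rfl⟩

theorem mem_cutsF_nil {c : List CutShape} : c ∈ cutsF [] ↔ c = [] := by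
  simp [cutsF]

theorem len_Pcut : ∀ (F : List RTree) (c : List CutShape), c ∈ cutsF F →
    (Pcut F c).length = fullsL c
  | [], c, hc => by
      rw [mem_cutsF_nil] at hc; subst hc; simp [Pcut, fullsL]
  | .node l :: ts, c, hc => by
      rw [mem_cutsF_cons] at hc
      rcases hc with ⟨cs, hcs, rfl⟩ | ⟨ds, hds, cs, hcs, rfl⟩
      · simp [Pcut, fullsL, len_Pcut ts cs hcs, Nat.add_comm]
      · simp [Pcut, fullsL, len_Pcut l ds hds, len_Pcut ts cs hcs]

theorem size_Pcut_Rcut : ∀ (F : List RTree) (c : List CutShape), c ∈ cutsF F →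
    sizeL (Pcut F c) + sizeL (Rcut F c) = sizeL F
  | [], c, hc => by
      rw [mem_cutsF_nil] at hc; subst hc; simp [Pcut, Rcut, sizeL]
  | .node l :: ts, c, hc => by
      rw [mem_cutsF_cons] at hc
      rcases hc with ⟨cs, hcs, rfl⟩ | ⟨ds, hds, cs, hcs, rfl⟩
      · have := size_Pcut_Rcut ts cs hcs
        simp [Pcut, Rcut, sizeL]; omega
      · have h1 := size_Pcut_Rcut l ds hds
        have h2 := size_Pcut_Rcut ts cs hcs
        have append : ∀ (A B : List RTree), sizeL (A ++ B) = sizeL A + sizeL B := by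
          intro A B
          induction A with
          | nil => simp [sizeL]
          | cons t ts ih => cases t; simp [sizeL, ih]; omega
        simp [Pcut, Rcut, sizeL, append]; omega

theorem sizeL_append : ∀ (A B : List RTree), sizeL (A ++ B) = sizeL A + sizeL B := by
  intro A B
  induction A with
  | nil => simp [sizeL]
  | cons t ts ih => cases t; simp [sizeL, ih]; omega

theorem fulls_zero : ∀ (F : List RTree) (c : List CutShape), c ∈ cutsF F →
    fullsL c = 0 → Pcut F c = [] ∧ Rcut F c = F
  | [], c, hc, _ => by
      rw [mem_cutsF_nil] at hc; subst hc; simp [Pcut, Rcut]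
  | .node l :: ts, c, hc, h0 => by
      rw [mem_cutsF_cons] at hc
      rcases hc with ⟨cs, hcs, rfl⟩ | ⟨ds, hds, cs, hcs, rfl⟩
      · simp [fullsL] at h0
      · simp only [fullsL, Nat.add_eq_zero] at h0
        have h1 := fulls_zero l ds hds h0.1
        have h2 := fulls_zero ts cs hcs h0.2
        simp [Pcut, Rcut, h1.1, h1.2, h2.1, h2.2]

def isFull : CutShape → Bool
  | .full => true
  | .branch _ => false

theorem len_Rcut : ∀ (F : List RTree) (c : List CutShape), c ∈ cutsF F →
    (Rcut F c).length + c.countP isFull = F.length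
  | [], c, hc => by
      rw [mem_cutsF_nil] at hc; subst hc; simp [Rcut]
  | .node l :: ts, c, hc => by
      rw [mem_cutsF_cons] at hc
      rcases hc with ⟨cs, hcs, rfl⟩ | ⟨ds, hds, cs, hcs, rfl⟩
      · have := len_Rcut ts cs hcs
        simp only [Rcut, List.countP_cons, isFull]
        simp_all; omega
      · have := len_Rcut ts cs hcs
        simp only [Rcut, List.countP_cons, isFull]
        simp_all
        omega

theorem topFulls_le : ∀ (c : List CutShape), c.countP isFull ≤ fullsL c := by
  intro c
  induction c with
  | nil => simp [fullsL]
  | cons h t ih =>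
      cases h with
      | full => simp [fullsL, List.countP_cons, isFull]; omega
      | branch ds => simp [fullsL, List.countP_cons, isFull]; omega

theorem countP_flatMap {α β : Type*} (p : β → Bool) (g : α → List β) :
    ∀ (l : List α), (l.flatMap g).countP p = (l.map fun a => (g a).countP p).sum := by
  intro l
  induction l with
  | nil => simp
  | cons a t ih => simp [List.flatMap_cons, ih]

theorem count_fullszero : ∀ (F : List RTree),
    (cutsF F).countP (fun c => decide (fullsL c = 0)) = 1
  | [] => by simp [cutsF, fullsL]
  | .node l :: ts => by
      have hl := count_fullszero l
      have hts := count_fullszero ts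
      simp only [cutsF, countP_flatMap, List.map_cons, List.map_map]
      simp only [List.countP_map, List.sum_cons]
      have h1 : (List.countP ((fun c => decide (fullsL c = 0)) ∘ (CutShape.full :: ·)) (cutsF ts)) = 0 := by
        simp [Function.comp, fullsL]
      have h2 : ∀ ds : List CutShape,
          (List.countP ((fun c => decide (fullsL c = 0)) ∘ (CutShape.branch ds :: ·)) (cutsF ts))
          = if fullsL ds = 0 then 1 else 0 := by
        intro ds
        split
        · next h => rw [← hts]; apply List.countP_congr; intro c _; simp [Function.comp, fullsL, h]
        · next h => simp only [List.countP_eq_zero]; intro c _; simp [Function.comp, fullsL]; omega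
      have h3 : List.map ((fun a => List.countP ((fun c => decide (fullsL c = 0)) ∘ (a :: ·)) (cutsF ts)) ∘ CutShape.branch) (cutsF l)
          = List.map (fun ds => if fullsL ds = 0 then 1 else 0) (cutsF l) :=
        List.map_congr_left (fun ds _ => h2 ds)
      rw [h1, h3, Nat.zero_add]
      rw [show (List.map (fun ds => if fullsL ds = 0 then 1 else 0) (cutsF l)).sum
          = (cutsF l).countP (fun ds => decide (fullsL ds = 0)) from ?_, hl]
      rw [List.countP_eq_length_filter]
      induction (cutsF l) with
      | nil => simp
      | cons a t ih => by_cases h : fullsL a = 0 <;> simp [h, ih, List.filter_cons] <;> omega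


@[simp] theorem sizeL_nil : sizeL [] = 0 := by simp [sizeL]

theorem sizeL_cons (t : RTree) (ts : List RTree) : sizeL (t :: ts) = sizeL [t] + sizeL ts := by
  cases t; simp [sizeL]

theorem sizeL_eq_sum : ∀ (l : List RTree), sizeL l = (l.map fun t => sizeL [t]).sum := by
  intro l
  induction l with
  | nil => simp
  | cons t ts ih => rw [sizeL_cons t ts]; simp [ih]

theorem sizeL_perm {a b : List RTree} (h : a.Perm b) : sizeL a = sizeL b := by
  rw [sizeL_eq_sum, sizeL_eq_sum]
  exact (h.map _).sum_eq

theorem iso_size : ∀ (n : ℕ) (t t' : RTree), sizeL [t] ≤ n → Iso t t' → sizeL [t] = sizeL [t'] := by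
  intro n
  induction n with
  | zero => intro t t' hle _; cases t with | node l => simp [sizeL] at hle
  | succ n ih =>
      intro t t' hle hiso
      cases hiso with
      | @node l₁ l l₂ hf hp =>
          have hsz : sizeL l₁ ≤ n := by simp [sizeL] at hle ⊢; omega
          have key : ∀ (a b : List RTree), List.Forall₂ Iso a b → sizeL a ≤ n → sizeL a = sizeL b := by
            intro a b hf
            induction hf with
            | nil => intro _; rfl
            | @cons x y xs ys hxy _ ih2 =>
                intro hb
                rw [sizeL_cons x xs, sizeL_cons y ys]
                rw [sizeL_cons x xs] at hb
                have h1 : sizeL [x] = sizeL [y] := ih x y (by omega) hxy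
                have h2 := ih2 (by omega)
                omega
          have h3 := key l₁ l hf hsz
          have h4 := sizeL_perm hp
          simp [sizeL]; omega

noncomputable def szQ : TreeClass → ℕ :=
  Quot.lift (fun t => sizeL [t]) (fun a b h => iso_size (sizeL [a]) a b le_rfl h)

noncomputable def szF (M : ForestClass) : ℕ := (M.map szQ).sum

theorem szF_clF : ∀ (F : List RTree), szF (clF F) = sizeL F := by
  intro F
  induction F with
  | nil => simp [szF, clF]
  | cons t ts ih =>
      rw [sizeL_cons]
      have : clF (t :: ts) = clT t ::ₘ clF ts := by simp [clF]
      rw [this, szF, Multiset.map_cons, Multiset.sum_cons, ← szF]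
      have : szQ (clT t) = sizeL [t] := rfl
      omega


theorem clT_iso {t t' : RTree} (h : Iso t t') : clT t = clT t' := Quot.sound h

theorem clF_forall₂ : ∀ {a w : List RTree}, List.Forall₂ Iso a w → clF a = clF w := by
  intro a w h
  induction h with
  | nil => rfl
  | cons hxy _ ih =>
      simp only [clF, List.map_cons] at ih ⊢
      rw [clT_iso hxy]
      exact congrArg (clT _ ::ₘ ·) ih

theorem clF_perm {a b : List RTree} (h : a.Perm b) : clF a = clF b :=
  Multiset.coe_eq_coe.mpr (h.map clT)

theorem upTo_complete : ∀ (n : ℕ) (F : List RTree), sizeL F ≤ n →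
    ∃ F' ∈ forestsUpTo n, ∃ w, List.Forall₂ Iso F' w ∧ w.Perm F := by
  intro n
  induction n with
  | zero =>
      intro F hF
      have : F = [] := by
        cases F with
        | nil => rfl
        | cons t ts => cases t; simp [sizeL] at hF
      subst this
      exact ⟨[], by simp [forestsUpTo], [], List.Forall₂.nil, List.Perm.refl _⟩
  | succ n ih =>
      intro F hF
      cases F with
      | nil => exact ⟨[], by simp [forestsUpTo], [], List.Forall₂.nil, List.Perm.refl _⟩
      | cons t ts =>
          cases t with
          | node l =>
              have hsz : sizeL l ≤ n ∧ sizeL ts ≤ n := by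
                simp only [sizeL] at hF
                omega
              obtain ⟨l', hl', wl, hwl, hwlp⟩ := ih l hsz.1
              obtain ⟨ts', hts', wts, hwts, hwtsp⟩ := ih ts hsz.2
              refine ⟨RTree.node l' :: ts', ?_, RTree.node l :: wts, ?_, hwtsp.cons _⟩
              · simp only [forestsUpTo, List.mem_cons, List.mem_flatMap, List.mem_map]
                exact Or.inr ⟨l', hl', ts', hts', rfl⟩
              · exact List.Forall₂.cons (Iso.node hwl hwlp) hwts

theorem clF_of_witness {F' F : List RTree} (h : ∃ w, List.Forall₂ Iso F' w ∧ w.Perm F) :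
    clF F' = clF F := by
  obtain ⟨w, h1, h2⟩ := h
  rw [clF_forall₂ h1, clF_perm h2]

theorem forestCand_complete {M : ForestClass} {n : ℕ} (h : szF M ≤ n) : M ∈ forestCand n := by
  have hM : clF (repF M) = M := by
    simp only [clF, repF, List.map_map]
    have : (clT ∘ Quot.out) = id := funext fun x => Quot.out_eq x
    rw [this, List.map_id, Multiset.coe_toList]
  have hsz : sizeL (repF M) ≤ n := by rw [← szF_clF (repF M), hM]; exact h
  obtain ⟨F', hF', hw⟩ := upTo_complete n (repF M) hsz
  simp only [forestCand, List.mem_toFinset, List.mem_map]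
  exact ⟨F', hF', by rw [clF_of_witness hw, hM]⟩

theorem clT_repT (U : TreeClass) : clT (repT U) = U := Quot.out_eq U

theorem treeCand_complete {U : TreeClass} {n : ℕ} (h : szQ U ≤ n + 1) : U ∈ treeCand n := by
  obtain ⟨l, hl⟩ : ∃ l, repT U = RTree.node l := by cases hrep : repT U with | node l => exact ⟨l, rfl⟩
  have hszU : szQ U = sizeL [repT U] := by
    conv_lhs => rw [← clT_repT U]
    rfl
  have hsz : sizeL l ≤ n := by
    rw [hszU, hl] at h
    simp [sizeL] at h
    omega
  obtain ⟨l', hl', hw⟩ := upTo_complete n l hsz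
  simp only [treeCand, List.mem_toFinset, List.mem_map]
  refine ⟨l', hl', ?_⟩
  obtain ⟨w, h1, h2⟩ := hw
  rw [clT_iso (Iso.node h1 h2), ← hl, clT_repT]


theorem szQ_repT (U : TreeClass) : szQ U = sizeL [repT U] := by
  conv_lhs => rw [← clT_repT U]
  rfl

theorem clF_repF (M : ForestClass) : clF (repF M) = M := by
  simp only [clF, repF, List.map_map]
  have : (clT ∘ Quot.out) = id := funext fun x => Quot.out_eq x
  rw [this, List.map_id, Multiset.coe_toList]

theorem repF_singleton (U : TreeClass) : repF ({U} : ForestClass) = [repT U] := by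
  simp [repF, Multiset.toList_singleton, repT]

theorem sizeC_singleton (S : TreeClass) : sizeC ({S} : ForestClass) = sizeT S := by
  rw [sizeC, repF_singleton, sizeT]

theorem sizeT_szQ (S : TreeClass) : sizeT S = szQ S := (szQ_repT S).symm

theorem sizeC_szF (M : ForestClass) : sizeC M = szF M := by
  rw [sizeC, ← szF_clF (repF M), clF_repF]

theorem szF_singleton (S : TreeClass) : szF ({S} : ForestClass) = szQ S := by
  simp [szF]

theorem length_of_clF_singleton {P : List RTree} {S : TreeClass}
    (h : clF P = ({S} : ForestClass)) : P.length = 1 := by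
  have := congrArg Multiset.card h
  simpa [clF] using this

theorem sizeL_of_clF {P : List RTree} {A : ForestClass} (h : clF P = A) :
    sizeL P = szF A := by rw [← h, szF_clF]

theorem nCuts_singleton (S T U : TreeClass) :
    nCuts ({S} : ForestClass) ({T} : ForestClass) ({U} : ForestClass) = aCount S T U := by
  unfold nCuts aCount
  rw [repF_singleton]
  apply List.countP_congr
  intro c hc
  simp only [decide_eq_true_eq]
  constructor
  · rintro ⟨h1, h2⟩
    refine ⟨?_, h1, h2⟩
    rw [← len_Pcut _ c hc, length_of_clF_singleton h1]
  · rintro ⟨_, h1, h2⟩; exact ⟨h1, h2⟩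

theorem nCuts_ne_zero_size {S T : TreeClass} {M : ForestClass}
    (h : nCuts ({S} : ForestClass) ({T} : ForestClass) M ≠ 0) : szF M = szQ S + szQ T := by
  unfold nCuts at h
  rw [← Nat.pos_iff_ne_zero, List.countP_pos_iff] at h
  obtain ⟨c, hc, hp⟩ := h
  simp only [decide_eq_true_eq] at hp
  have h1 := sizeL_of_clF hp.1
  have h2 := sizeL_of_clF hp.2
  have h3 := size_Pcut_Rcut _ c hc
  rw [h1, h2] at h3
  rw [← szF_clF (repF M), clF_repF] at h3
  rw [← h3, szF_singleton, szF_singleton]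

theorem aCount_ne_zero_size {S T U : TreeClass}
    (h : aCount S T U ≠ 0) : szQ U = szQ S + szQ T := by
  unfold aCount at h
  rw [← Nat.pos_iff_ne_zero, List.countP_pos_iff] at h
  obtain ⟨c, hc, hp⟩ := h
  simp only [decide_eq_true_eq] at hp
  have h1 := sizeL_of_clF hp.2.1
  have h2 := sizeL_of_clF hp.2.2
  have h3 := size_Pcut_Rcut _ c hc
  rw [h1, h2] at h3
  rw [szQ_repT U, ← h3, szF_singleton, szF_singleton]


@[simp] theorem clF_nil : clF [] = 0 := rfl

@[simp] theorem clF_cons (t : RTree) (ts : List RTree) : clF (t :: ts) = clT t ::ₘ clF ts := by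
  simp [clF]

theorem clF_eq_nil {x : List RTree} : clF x = 0 ↔ x = [] := by
  simp [clF]

theorem clF_eq_singleton {t : RTree} {ts : List RTree} {S : TreeClass} :
    clF (t :: ts) = ({S} : ForestClass) ↔ clT t = S ∧ ts = [] := by
  rw [clF_cons, eq_comm, Multiset.singleton_eq_cons_iff]
  simp [eq_comm, clF_eq_nil]

theorem sum_map_ite {α : Type*} (q : α → Prop) [DecidablePred q] (l : List α) :
    (l.map fun a => if q a then (1:ℕ) else 0).sum = l.countP fun a => decide (q a) := by
  induction l with
  | nil => simp
  | cons a t ih => by_cases h : q a <;> simp [h, ih, List.countP_cons] <;> omega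

theorem Pcut_eq_nil_iff {l : List RTree} {ds : List CutShape} (h : ds ∈ cutsF l) :
    Pcut l ds = [] ↔ fullsL ds = 0 := by
  constructor
  · intro he
    have := len_Pcut l ds h
    rw [he] at this
    simpa using this.symm
  · intro h0
    exact (fulls_zero l ds h h0).1

theorem countP_Pcut_nil (l : List RTree) :
    (cutsF l).countP (fun ds => decide (Pcut l ds = [])) = 1 := by
  rw [← count_fullszero l]
  apply List.countP_congr
  intro ds hds
  simp only [decide_eq_true_eq]
  exact Pcut_eq_nil_iff hds

theorem countP_pair (t₁ t₂ : RTree) (S T : TreeClass) :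
    (cutsF [t₁, t₂]).countP (fun c =>
        decide (clF (Pcut [t₁, t₂] c) = ({S} : ForestClass) ∧
          clF (Rcut [t₁, t₂] c) = ({T} : ForestClass)))
      = (if clT t₁ = S ∧ clT t₂ = T then 1 else 0)
        + (if clT t₂ = S ∧ clT t₁ = T then 1 else 0) := by
  cases t₁ with | node l₁ => ?_
  cases t₂ with | node l₂ => ?_
  have hgen : ∀ (L : List CutShape), (L.flatMap fun c => (cutsF []).map (c :: ·)) = L.map fun c => [c] := by
    intro L
    induction L with
    | nil => rfl
    | cons a t ih =>
        simp only [List.flatMap_cons] at ih ⊢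
        rw [ih, show cutsF [] = [[]] from by simp [cutsF]]
        rfl
  have hc2 : cutsF [RTree.node l₂] = (CutShape.full :: (cutsF l₂).map CutShape.branch).map (fun c => [c]) := by
    conv_lhs => rw [show ([RTree.node l₂] : List RTree) = RTree.node l₂ :: [] from rfl, cutsF]
    exact hgen _
  have hsplit : cutsF [RTree.node l₁, RTree.node l₂]
      = (CutShape.full :: (cutsF l₁).map CutShape.branch).flatMap
          (fun c₁ => (CutShape.full :: (cutsF l₂).map CutShape.branch).map (fun c₂ => [c₁, c₂])) := by
    conv_lhs => rw [show ([RTree.node l₁, RTree.node l₂] : List RTree) = RTree.node l₁ :: [RTree.node l₂] from rfl, cutsF]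
    rw [hc2]
    simp only [List.map_map]
    rfl
  set p : List CutShape → Bool := fun c =>
      decide (clF (Pcut [RTree.node l₁, RTree.node l₂] c) = ({S} : ForestClass) ∧
        clF (Rcut [RTree.node l₁, RTree.node l₂] c) = ({T} : ForestClass)) with hp
  -- evaluations of Pcut/Rcut on two-element cuts
  have epff : p [CutShape.full, CutShape.full] = false := by
    simp only [hp, Pcut, Rcut, decide_eq_false_iff_not]
    rintro ⟨h1, -⟩
    rw [clF_eq_singleton] at h1
    exact absurd h1.2 (by simp)
  have epfb : ∀ ds ∈ cutsF l₂, (p [CutShape.full, CutShape.branch ds] = true ↔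
      (clT (RTree.node l₁) = S ∧ clT (RTree.node l₂) = T ∧ Pcut l₂ ds = [])) := by
    intro ds hds
    simp only [hp, Pcut, Rcut, decide_eq_true_eq, List.append_nil]
    constructor
    · rintro ⟨h1, h2⟩
      rw [clF_eq_singleton] at h1 h2
      have hnil : Pcut l₂ ds = [] := h1.2
      have : Rcut l₂ ds = l₂ := (fulls_zero l₂ ds hds ((Pcut_eq_nil_iff hds).mp hnil)).2
      rw [this] at h2
      exact ⟨h1.1, h2.1, hnil⟩
    · rintro ⟨h1, h2, h3⟩
      have : Rcut l₂ ds = l₂ := (fulls_zero l₂ ds hds ((Pcut_eq_nil_iff hds).mp h3)).2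
      rw [h3, this]
      simp [clF_eq_singleton, h1, h2]
  have epbf : ∀ ds ∈ cutsF l₁, (p [CutShape.branch ds, CutShape.full] = true ↔
      (clT (RTree.node l₂) = S ∧ clT (RTree.node l₁) = T ∧ Pcut l₁ ds = [])) := by
    intro ds hds
    simp only [hp, Pcut, Rcut, decide_eq_true_eq]
    constructor
    · rintro ⟨h1, h2⟩
      have hlen := length_of_clF_singleton h1
      rw [List.length_append] at hlen
      have hnil : Pcut l₁ ds = [] := by
        cases hP : Pcut l₁ ds with
        | nil => rfl
        | cons a b => rw [hP] at hlen; simp at hlen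
      rw [hnil] at h1
      simp only [List.nil_append] at h1
      rw [clF_eq_singleton] at h1 h2
      have : Rcut l₁ ds = l₁ := (fulls_zero l₁ ds hds ((Pcut_eq_nil_iff hds).mp hnil)).2
      rw [this] at h2
      exact ⟨h1.1, h2.1, hnil⟩
    · rintro ⟨h1, h2, h3⟩
      have : Rcut l₁ ds = l₁ := (fulls_zero l₁ ds hds ((Pcut_eq_nil_iff hds).mp h3)).2
      rw [h3, this]
      simp [clF_eq_singleton, h1, h2]
  have epbb : ∀ ds₁ ds₂ : List CutShape, p [CutShape.branch ds₁, CutShape.branch ds₂] = false := by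
    intro ds₁ ds₂
    simp only [hp, Pcut, Rcut, decide_eq_false_iff_not]
    rintro ⟨-, h2⟩
    rw [clF_eq_singleton] at h2
    exact absurd h2.2 (by simp)
  -- counting
  rw [hsplit, countP_flatMap, List.map_cons, List.sum_cons, List.map_map]
  have inner_full : ((CutShape.full :: (cutsF l₂).map CutShape.branch).map
      (fun c₂ => [CutShape.full, c₂])).countP p
      = if clT (RTree.node l₁) = S ∧ clT (RTree.node l₂) = T then 1 else 0 := by
    rw [List.map_cons, List.countP_cons, List.map_map, List.countP_map, epff]
    simp only [if_false, Bool.false_eq_true]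
    by_cases hc : clT (RTree.node l₁) = S ∧ clT (RTree.node l₂) = T
    · rw [if_pos hc]
      have : List.countP (p ∘ (fun c₂ => [CutShape.full, c₂]) ∘ CutShape.branch) (cutsF l₂)
          = List.countP (fun ds => decide (Pcut l₂ ds = [])) (cutsF l₂) := by
        apply List.countP_congr
        intro ds hds
        simp only [Function.comp, decide_eq_true_eq]
        rw [epfb ds hds]
        simp [hc.1, hc.2]
      rw [this, countP_Pcut_nil]
    · rw [if_neg hc, Nat.add_zero]
      rw [List.countP_eq_zero]
      intro ds hds
      simp only [Function.comp]
      intro hcontra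
      rw [epfb ds hds] at hcontra
      exact hc ⟨hcontra.1, hcontra.2.1⟩
  have inner_branch : ∀ ds₁ ∈ cutsF l₁,
      ((CutShape.full :: (cutsF l₂).map CutShape.branch).map
        (fun c₂ => [CutShape.branch ds₁, c₂])).countP p
      = if clT (RTree.node l₂) = S ∧ clT (RTree.node l₁) = T ∧ Pcut l₁ ds₁ = [] then 1 else 0 := by
    intro ds₁ hds₁
    rw [List.map_cons, List.countP_cons, List.map_map, List.countP_map]
    have hz : List.countP (p ∘ (fun c₂ => [CutShape.branch ds₁, c₂]) ∘ CutShape.branch) (cutsF l₂) = 0 := by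
      rw [List.countP_eq_zero]
      intro ds hds
      simp only [Function.comp]
      rw [epbb]
      simp
    rw [hz, Nat.zero_add]
    by_cases hc : clT (RTree.node l₂) = S ∧ clT (RTree.node l₁) = T ∧ Pcut l₁ ds₁ = []
    · rw [if_pos hc, if_pos ((epbf ds₁ hds₁).mpr hc)]
    · rw [if_neg hc, if_neg (fun hcontra => hc ((epbf ds₁ hds₁).mp hcontra))]
  rw [inner_full]
  have houter : (List.map ((fun c₁ => ((CutShape.full :: (cutsF l₂).map CutShape.branch).map
        (fun c₂ => [c₁, c₂])).countP p) ∘ CutShape.branch) (cutsF l₁)).sum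
      = if clT (RTree.node l₂) = S ∧ clT (RTree.node l₁) = T then 1 else 0 := by
    have : List.map ((fun c₁ => ((CutShape.full :: (cutsF l₂).map CutShape.branch).map
          (fun c₂ => [c₁, c₂])).countP p) ∘ CutShape.branch) (cutsF l₁)
        = List.map (fun ds₁ => if clT (RTree.node l₂) = S ∧ clT (RTree.node l₁) = T ∧ Pcut l₁ ds₁ = []
            then 1 else 0) (cutsF l₁) :=
      List.map_congr_left (fun ds₁ h => inner_branch ds₁ h)
    rw [this]
    by_cases hc : clT (RTree.node l₂) = S ∧ clT (RTree.node l₁) = T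
    · rw [if_pos hc]
      have : List.map (fun ds₁ => if clT (RTree.node l₂) = S ∧ clT (RTree.node l₁) = T ∧ Pcut l₁ ds₁ = []
            then 1 else 0) (cutsF l₁) = List.map (fun ds₁ => if Pcut l₁ ds₁ = [] then 1 else 0) (cutsF l₁) := by
        apply List.map_congr_left
        intro ds₁ _
        simp [hc.1, hc.2]
      rw [this, sum_map_ite, countP_Pcut_nil]
    · rw [if_neg hc]
      have : List.map (fun ds₁ => if clT (RTree.node l₂) = S ∧ clT (RTree.node l₁) = T ∧ Pcut l₁ ds₁ = []
            then 1 else 0) (cutsF l₁) = List.map (fun _ => (0:ℕ)) (cutsF l₁) := by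
        apply List.map_congr_left
        intro ds₁ _
        rw [if_neg (fun h => hc ⟨h.1, h.2.1⟩)]
      rw [this]
      simp
  rw [houter]


theorem pred_len_le {F : List RTree} {c : List CutShape} {S T : TreeClass}
    (hc : c ∈ cutsF F) (h1 : clF (Pcut F c) = ({S} : ForestClass))
    (h2 : clF (Rcut F c) = ({T} : ForestClass)) : F.length ≤ 2 := by
  have lP := length_of_clF_singleton h1
  have lR := length_of_clF_singleton h2
  have e1 := len_Pcut F c hc
  have e2 := len_Rcut F c hc
  have e3 := topFulls_le c
  omega

theorem nCuts_symm {S T : TreeClass} {M : ForestClass} (h : ∀ U, M ≠ ({U} : ForestClass)) :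
    nCuts ({S} : ForestClass) ({T} : ForestClass) M = nCuts ({T} : ForestClass) ({S} : ForestClass) M := by
  unfold nCuts
  have hM : clF (repF M) = M := clF_repF M
  generalize hF : repF M = F at *
  cases F with
  | nil =>
      rw [List.countP_eq_zero.mpr, List.countP_eq_zero.mpr]
      all_goals
        intro c hc
        rw [mem_cutsF_nil] at hc; subst hc
        intro hq
        rw [decide_eq_true_eq] at hq
        have hP : Pcut ([] : List RTree) ([] : List CutShape) = [] := by simp [Pcut]
        rw [hP, clF_nil] at hq
        exact Multiset.singleton_ne_zero _ hq.1.symm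
  | cons t₁ rest =>
      cases rest with
      | nil =>
          exfalso
          exact h (clT t₁) (by rw [← hM]; simp)
      | cons t₂ rest₂ =>
          cases rest₂ with
          | nil =>
              rw [countP_pair, countP_pair]
              simp only [show (clT t₁ = T ∧ clT t₂ = S) ↔ (clT t₂ = S ∧ clT t₁ = T) from and_comm,
                show (clT t₂ = T ∧ clT t₁ = S) ↔ (clT t₁ = S ∧ clT t₂ = T) from and_comm]
              exact Nat.add_comm _ _
          | cons t₃ rest₃ =>
              rw [List.countP_eq_zero.mpr, List.countP_eq_zero.mpr]
              · intro c hc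
                simp only [decide_eq_true_eq, not_and]
                intro h1 h2
                have := pred_len_le hc h1 h2
                simp at this
              · intro c hc
                simp only [decide_eq_true_eq, not_and]
                intro h1 h2
                have := pred_len_le hc h1 h2
                simp at this


theorem mulBasis_apply (S T : TreeClass) (M : ForestClass) :
    mulBasis ({S} : ForestClass) ({T} : ForestClass) M
      = (nCuts ({S} : ForestClass) ({T} : ForestClass) M : ℚ) := by
  unfold mulBasis
  rw [Finset.sum_apply']
  have : ∀ M' ∈ forestCand (sizeC ({S} : ForestClass) + sizeC ({T} : ForestClass)),
      ((nCuts ({S} : ForestClass) ({T} : ForestClass) M' : ℚ) • delta M') M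
        = if M' = M then (nCuts ({S} : ForestClass) ({T} : ForestClass) M' : ℚ) else 0 := by
    intro M' _
    rw [Finsupp.smul_apply, delta, Finsupp.single_apply]
    simp [mul_ite]
  rw [Finset.sum_congr rfl this, Finset.sum_ite_eq']
  by_cases hM : M ∈ forestCand (sizeC ({S} : ForestClass) + sizeC ({T} : ForestClass))
  · rw [if_pos hM]
  · rw [if_neg hM]
    by_cases h0 : nCuts ({S} : ForestClass) ({T} : ForestClass) M = 0
    · rw [h0]; simp
    · exfalso
      apply hM
      apply forestCand_complete
      rw [nCuts_ne_zero_size h0, sizeC_singleton, sizeC_singleton, sizeT_szQ, sizeT_szQ]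

theorem embed_tau (U : TreeClass) : embed (tau U) = Finsupp.single ({U} : ForestClass) 1 := by
  unfold embed tau
  rw [Finsupp.lmapDomain_apply, Finsupp.mapDomain_single]

theorem embed_graftBasis_singleton (S T U : TreeClass) :
    embed (graftBasis S T) ({U} : ForestClass) = (aCount S T U : ℚ) := by
  unfold graftBasis
  rw [map_sum, Finset.sum_apply']
  have : ∀ U' ∈ treeCand (sizeT S + sizeT T),
      (embed ((aCount S T U' : ℚ) • tau U')) ({U} : ForestClass)
        = if U' = U then (aCount S T U' : ℚ) else 0 := by
    intro U' _
    rw [map_smul, embed_tau, Finsupp.smul_apply, Finsupp.single_apply]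
    simp [Multiset.singleton_inj, mul_ite]
  rw [Finset.sum_congr rfl this, Finset.sum_ite_eq']
  by_cases hU : U ∈ treeCand (sizeT S + sizeT T)
  · rw [if_pos hU]
  · rw [if_neg hU]
    by_cases h0 : aCount S T U = 0
    · rw [h0]; simp
    · exfalso
      apply hU
      apply treeCand_complete
      rw [aCount_ne_zero_size h0, sizeT_szQ, sizeT_szQ]
      omega

theorem embed_graftBasis_nonsingleton (S T : TreeClass) {M : ForestClass}
    (h : ∀ U, M ≠ ({U} : ForestClass)) : embed (graftBasis S T) M = 0 := by
  unfold graftBasis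
  rw [map_sum, Finset.sum_apply']
  apply Finset.sum_eq_zero
  intro U' _
  rw [map_smul, embed_tau, Finsupp.smul_apply, Finsupp.single_apply,
    if_neg (fun he => h U' he.symm), smul_zero]

theorem key (S T : TreeClass) :
    embed (graftBasis S T) - mulBasis ({S} : ForestClass) ({T} : ForestClass)
      = embed (graftBasis T S) - mulBasis ({T} : ForestClass) ({S} : ForestClass) := by
  ext M
  simp only [Finsupp.sub_apply]
  by_cases h : ∃ U, M = ({U} : ForestClass)
  · obtain ⟨U, rfl⟩ := h
    rw [embed_graftBasis_singleton, embed_graftBasis_singleton, mulBasis_apply, mulBasis_apply,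
      nCuts_singleton, nCuts_singleton]
    ring
  · push_neg at h
    rw [embed_graftBasis_nonsingleton S T h, embed_graftBasis_nonsingleton T S h,
      mulBasis_apply, mulBasis_apply, nCuts_symm h]


theorem singleton_injective' : Function.Injective (fun U : TreeClass => ({U} : Multiset TreeClass)) :=
  fun _ _ h => Multiset.singleton_inj.mp h

theorem embed_eq_mapDomain (x : nT) :
    embed x = Finsupp.mapDomain (fun U : TreeClass => ({U} : Multiset TreeClass)) x := rfl

theorem sum_embed {N : Type*} [AddCommMonoid N] (x : nT) (g : ForestClass → ℚ → N)
    (h0 : ∀ A, g A 0 = 0) (hadd : ∀ A a₁ a₂, g A (a₁ + a₂) = g A a₁ + g A a₂) :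
    (embed x).sum g = x.sum fun U a => g ({U} : ForestClass) a := by
  rw [embed_eq_mapDomain]
  exact Finsupp.sum_mapDomain_index h0 (fun b m₁ m₂ => hadd b m₁ m₂)

theorem hmul_embed (x y : nT) :
    hmul (embed x) (embed y)
      = x.sum fun S a => y.sum fun T b =>
          (a * b) • mulBasis ({S} : ForestClass) ({T} : ForestClass) := by
  unfold hmul
  rw [sum_embed x _ (fun A => by simp) (fun A a₁ a₂ => by
    rw [← Finsupp.sum_add]
    congr 1
    ext B b
    rw [add_mul, add_smul])]
  apply Finsupp.sum_congr
  intro S _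
  exact sum_embed y _ (fun B => by simp) (fun B b₁ b₂ => by rw [mul_add, add_smul])

theorem embed_graft (x y : nT) :
    embed (graft x y)
      = x.sum fun S a => y.sum fun T b => (a * b) • embed (graftBasis S T) := by
  unfold graft
  rw [map_finsuppSum]
  apply Finsupp.sum_congr
  intro S _
  rw [map_finsuppSum]
  apply Finsupp.sum_congr
  intro T _
  rw [map_smul]

theorem part2 (x y : nT) :
    embed (ckBracket x y) = hmul (embed x) (embed y) - hmul (embed y) (embed x) := by
  unfold ckBracket
  rw [map_sub, embed_graft, embed_graft, hmul_embed, hmul_embed]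
  rw [sub_eq_sub_iff_sub_eq_sub]
  have hL : (x.sum fun S a => y.sum fun T b => (a * b) • embed (graftBasis S T))
      - (x.sum fun S a => y.sum fun T b => (a * b) • mulBasis ({S} : ForestClass) ({T} : ForestClass))
      = x.sum fun S a => y.sum fun T b =>
          (a * b) • (embed (graftBasis S T) - mulBasis ({S} : ForestClass) ({T} : ForestClass)) := by
    rw [← Finsupp.sum_sub]
    apply Finsupp.sum_congr
    intro S _
    rw [← Finsupp.sum_sub]
    apply Finsupp.sum_congr
    intro T _
    rw [smul_sub]
  have hR : (y.sum fun T b => x.sum fun S a => (b * a) • embed (graftBasis T S))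
      - (y.sum fun T b => x.sum fun S a => (b * a) • mulBasis ({T} : ForestClass) ({S} : ForestClass))
      = y.sum fun T b => x.sum fun S a =>
          (b * a) • (embed (graftBasis T S) - mulBasis ({T} : ForestClass) ({S} : ForestClass)) := by
    rw [← Finsupp.sum_sub]
    apply Finsupp.sum_congr
    intro T _
    rw [← Finsupp.sum_sub]
    apply Finsupp.sum_congr
    intro S _
    rw [smul_sub]
  rw [hL, hR, Finsupp.sum_comm]
  apply Finsupp.sum_congr
  intro S _
  apply Finsupp.sum_congr
  intro T _
  rw [mul_comm, key S T]

theorem deltaBasis_apply (M A B : ForestClass) :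
    deltaBasis M (A, B) = if M = A + B then 1 else 0 := by
  unfold deltaBasis
  rw [Finset.sum_apply']
  have : ∀ A' ∈ M.powerset.toFinset,
      (Finsupp.single (A', M - A') (1:ℚ)) (A, B)
        = if A' = A then (if M - A = B then 1 else 0) else 0 := by
    intro A' _
    rw [Finsupp.single_apply]
    by_cases h1 : A' = A
    · subst h1
      by_cases h2 : M - A' = B
      · simp [h2]
      · simp [h2, Prod.ext_iff]
    · simp [h1, Prod.ext_iff]
  rw [Finset.sum_congr rfl this, Finset.sum_ite_eq']
  by_cases hA : A ∈ M.powerset.toFinset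
  · rw [if_pos hA]
    rw [Multiset.mem_toFinset, Multiset.mem_powerset] at hA
    by_cases h2 : M - A = B
    · rw [if_pos h2, if_pos (by rw [← h2]; exact (add_tsub_cancel_of_le hA).symm)]
    · rw [if_neg h2, if_neg]
      intro hM
      exact h2 (by rw [hM, add_tsub_cancel_left])
  · rw [if_neg hA, if_neg]
    intro hM
    rw [Multiset.mem_toFinset, Multiset.mem_powerset] at hA
    exact hA (by rw [hM]; exact le_self_add)

theorem sum_single_point {α : Type*} [DecidableEq α] (f : α →₀ ℚ) (c : α) :
    (f.sum fun a v => v * (if a = c then 1 else 0)) = f c := by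
  have : (f.sum fun a v => v * (if a = c then 1 else 0))
      = ∑ a ∈ f.support, if a = c then f a else 0 := by
    apply Finset.sum_congr rfl
    intro a _
    by_cases h : a = c <;> simp [h]
  rw [this, Finset.sum_ite_eq']
  by_cases h : c ∈ f.support
  · rw [if_pos h]
  · rw [if_neg h, eq_comm]
    exact Finsupp.notMem_support_iff.mp h

theorem coprod_apply (f : H) (A B : ForestClass) : coprod f (A, B) = f (A + B) := by
  unfold coprod
  rw [Finsupp.lsum_apply, Finsupp.sum_apply]
  have : (f.sum fun M v => (LinearMap.toSpanSingleton ℚ H2 (deltaBasis M)) v (A, B))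
      = f.sum fun M v => v * (if M = A + B then 1 else 0) := by
    apply Finsupp.sum_congr
    intro M _
    rw [LinearMap.toSpanSingleton_apply, Finsupp.smul_apply, deltaBasis_apply, smul_eq_mul]
  rw [this]
  exact sum_single_point f (A + B)

theorem mapDomain_fst_apply (f : H) (A B : ForestClass) :
    Finsupp.mapDomain (fun M => (M, (0 : ForestClass))) f (A, B)
      = if B = 0 then f A else 0 := by
  by_cases hB : B = 0
  · subst hB
    rw [if_pos rfl]
    exact Finsupp.mapDomain_apply (fun a b h => congrArg Prod.fst h) f A
  · rw [if_neg hB]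
    apply Finsupp.mapDomain_notin_range
    rintro ⟨M, hM⟩
    exact hB (congrArg Prod.snd hM).symm

theorem mapDomain_snd_apply (f : H) (A B : ForestClass) :
    Finsupp.mapDomain (fun M => ((0 : ForestClass), M)) f (A, B)
      = if A = 0 then f B else 0 := by
  by_cases hA : A = 0
  · subst hA
    rw [if_pos rfl]
    exact Finsupp.mapDomain_apply (fun a b h => congrArg Prod.snd h) f B
  · rw [if_neg hA]
    apply Finsupp.mapDomain_notin_range
    rintro ⟨M, hM⟩
    exact hA (congrArg Prod.fst hM).symm

theorem mem_range_embed (f : H) :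
    f ∈ Set.range embed ↔ ∀ M : ForestClass, (∀ U, M ≠ ({U} : ForestClass)) → f M = 0 := by
  constructor
  · rintro ⟨g, rfl⟩ M hM
    rw [embed_eq_mapDomain]
    apply Finsupp.mapDomain_notin_range
    rintro ⟨U, hU⟩
    exact hM U hU.symm
  · intro h
    refine ⟨Finsupp.comapDomain _ f singleton_injective'.injOn, ?_⟩
    rw [embed_eq_mapDomain]
    ext M
    by_cases hM : ∃ U, M = ({U} : ForestClass)
    · obtain ⟨U, rfl⟩ := hM
      rw [Finsupp.mapDomain_apply singleton_injective']
      rfl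
    · push_neg at hM
      rw [Finsupp.mapDomain_notin_range, h M hM]
      rintro ⟨U, hU⟩
      exact hM U hU.symm

/-- `T ↦ δ_T` is an injective homomorphism of Lie algebras from
`n_T` (with the Connes–Kreimer bracket) to `H` with the commutator bracket
`[f,g] = f×g − g×f`, and its image is exactly the space of primitive elements
of `H`. -/
theorem nT_to_H_injective_LieHom_image_primitives :
    Function.Injective embed ∧
    (∀ x y : nT,
      embed (ckBracket x y) = hmul (embed x) (embed y) - hmul (embed y) (embed x)) ∧
    Set.range embed
      = {f : H | coprod f
          = Finsupp.mapDomain (fun M => (M, (0 : ForestClass))) f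
            + Finsupp.mapDomain (fun M => ((0 : ForestClass), M)) f} := by
  refine ⟨?_, part2, ?_⟩
  · intro a b h
    apply Finsupp.mapDomain_injective singleton_injective'
    rw [← embed_eq_mapDomain, ← embed_eq_mapDomain, h]
  · ext f
    simp only [Set.mem_setOf_eq]
    rw [mem_range_embed]
    constructor
    · intro hf
      ext p
      obtain ⟨A, B⟩ := p
      rw [coprod_apply, Finsupp.add_apply, mapDomain_fst_apply, mapDomain_snd_apply]
      by_cases hA : A = 0
      · subst hA
        by_cases hB : B = 0
        · subst hB
          have h0 : f (0 : ForestClass) = 0 :=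
            hf 0 (fun U h => Multiset.singleton_ne_zero U h.symm)
          simp [h0]
        · rw [if_neg hB, if_pos rfl, zero_add, zero_add]
      · by_cases hB : B = 0
        · rw [if_pos hB, if_neg hA, add_zero, hB, add_zero]
        · rw [if_neg hB, if_neg hA, add_zero]
          apply hf
          intro U hU
          have hcard := congrArg Multiset.card hU
          rw [Multiset.card_add, Multiset.card_singleton] at hcard
          have hA' : 0 < Multiset.card A := Multiset.card_pos.mpr hA
          have hB' : 0 < Multiset.card B := Multiset.card_pos.mpr hB
          omega
    · intro hEq M hM
      have coeff : ∀ A B : ForestClass,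
          f (A + B) = (if B = 0 then f A else 0) + (if A = 0 then f B else 0) := by
        intro A B
        have h := congrArg (fun g : H2 => g (A, B)) hEq
        simp only [Finsupp.add_apply] at h
        rw [coprod_apply, mapDomain_fst_apply, mapDomain_snd_apply] at h
        exact h
      by_cases h0 : M = 0
      · subst h0
        have h := coeff 0 0
        rw [add_zero] at h
        split_ifs at h
        · linarith [h]
        · simp_all
      · obtain ⟨a, ha⟩ := Multiset.exists_mem_of_ne_zero h0
        have hBne : M.erase a ≠ 0 := by
          intro he
          apply hM a
          rw [← Multiset.cons_erase ha, he, Multiset.cons_zero]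
        have h := coeff {a} (M.erase a)
        rw [if_neg hBne, if_neg (Multiset.singleton_ne_zero a),
          Multiset.singleton_add, Multiset.cons_erase ha] at h
        simpa using h

end CK
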